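/- Let b, b' ∈ k be nonzero and let r, r' be natural numbers. There exists a unit g of k[[u]] with b·u^r·g = b'·u^{r'}·g^p if and only if r = r' and b/b' is a (p−1)-st power in k^× (i.e., there exists nonzero x ∈ k with x^{p−1}·b' = b). -/

import Mathlib

open PowerSeries

/-- **Isomorphism criterion for rank-one mod-`p` Breuil–Kisin modules.**
Let `k` be a field of characteristic `p`, `b, b' ∈ k^×` and `r, r' ∈ ℕ`.  A unit
`g ∈ k[[u]]^×` with `b·u^r·g = b'·u^{r'}·g^p` (i.e. an isomorphism
`(𝔖₁e₁, φ_{bu^r}) ≅ (𝔖₁e₁, φ_{b'u^{r'}})`, `e₁ ↦ g·e₁`, with `φ(g) = g^p`)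
exists iff `r = r'` and `b/b'` is a `(p−1)`-st power in `k^×`. -/
theorem rank_one_BK_iso_iff
    (p : ℕ) (hp : p.Prime) (k : Type*) [Field k] [CharP k p]
    (b b' : k) (hb : b ≠ 0) (hb' : b' ≠ 0) (r r' : ℕ) :
    (∃ g : PowerSeries k, IsUnit g ∧
        C b * X ^ r * g = C b' * X ^ r' * g ^ p) ↔
      (r = r' ∧ ∃ x : k, x ≠ 0 ∧ x ^ (p - 1) * b' = b) := by
  constructor
  · rintro ⟨g, hg, heq⟩
    have hg0 : constantCoeff g ≠ 0 := (hg.map (constantCoeff)).ne_zero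
    have hCb : IsUnit (C b) := isUnit_iff_constantCoeff.mpr (by simpa using hb.isUnit)
    have hCb' : IsUnit (C b') := isUnit_iff_constantCoeff.mpr (by simpa using hb'.isUnit)
    have hrr : r = r' := by
      have h1 := congrArg order heq
      simp only [order_mul, order_X_pow, order_zero_of_unit hg, order_zero_of_unit hCb,
        order_zero_of_unit hCb', order_zero_of_unit (hg.pow p)] at h1
      simpa using h1
    subst hrr
    refine ⟨rfl, constantCoeff g, hg0, ?_⟩
    have h2 : X ^ r * (C b * g) = X ^ r * (C b' * g ^ p) := by ring_nf; ring_nf at heq; linear_combination heq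
    have h3 : C b * g = C b' * g ^ p :=
      mul_left_cancel₀ (pow_ne_zero r X_ne_zero) h2
    have h4 := congrArg (constantCoeff) h3
    simp only [map_mul, map_pow, constantCoeff_C] at h4
    have hp1 : p - 1 + 1 = p := Nat.succ_pred_eq_of_pos hp.pos
    have : b * constantCoeff g = b' * (constantCoeff g ^ (p-1) * constantCoeff g) := by
      rw [← pow_succ, hp1]; exact h4
    have h5 : b = b' * constantCoeff g ^ (p - 1) :=
      mul_right_cancel₀ hg0 (by rw [this]; ring)
    rw [h5]; ring
  · rintro ⟨rfl, x, hx, hxb⟩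
    refine ⟨C x, isUnit_iff_constantCoeff.mpr (by simpa using hx.isUnit), ?_⟩
    rw [← map_pow]
    have : b * x = b' * x ^ p := by
      have hp1 : p - 1 + 1 = p := Nat.succ_pred_eq_of_pos hp.pos
      rw [← hp1, pow_succ, ← hxb]; ring
    rw [mul_right_comm, mul_right_comm (C b'), ← map_mul, ← map_mul, this]
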